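/- Let ν_n = f_n·μ_n be an admissible sequence of probability measures on Δ^{n-1}: f_n ≥ 0, ∫ f_n dμ_n = 1, and for each p ≥ 1 there exist A > 0 and 0 < b < 2 with f_n(ℓ) ≤ A·b^n for all ℓ ∈ Λ_p. Fix p ≥ 0. Then there exist C > 0 and 0 < a < 1 such that for all n, ν_n(Δ^{n-1} - Γ_{p+2}) ≤ C·a^n. -/

import Mathlib

open MeasureTheory Finset Filter

/-- The open standard simplex Δ^m ⊂ ℝ^{m+1}. -/
def Simplex (m : ℕ) : Set (Fin (m+1) → ℝ) :=
  {ℓ | (∀ i, 0 < ℓ i) ∧ ∑ i, ℓ i = 1}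

/-- Parametrization of the hyperplane ∑ ℓ i = 1 by ℝ^m. -/
noncomputable def emb (m : ℕ) (x : Fin m → ℝ) : Fin (m+1) → ℝ :=
  Fin.snoc x (1 - ∑ i, x i)

/-- Normalized Lebesgue measure of a subset of the simplex Δ^m,
computed as a ratio of Lebesgue volumes in the parametrizing chart. -/
noncomputable def simplexMeasure (m : ℕ) (A : Set (Fin (m+1) → ℝ)) : ENNReal :=
  volume (emb m ⁻¹' A) / volume (emb m ⁻¹' (Simplex m))

/-- The set Γ_p of length vectors for which every p-element subset is short. -/
def Gamma (m p : ℕ) : Set (Fin (m+1) → ℝ) :=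
  {ℓ ∈ Simplex m | ∀ J : Finset (Fin (m+1)), J.card = p → ∑ i ∈ J, ℓ i < 1/2}

/-- The set Λ_p where some coordinate is ≥ 1/(2p). -/
def Lambda (m p : ℕ) : Set (Fin (m+1) → ℝ) :=
  {ℓ ∈ Simplex m | ∃ i, 1/(2*(p:ℝ)) ≤ ℓ i}

/-- The normalized Lebesgue measure μ_n on the simplex Δ^m ⊂ ℝ^{m+1},
as an actual measure on ℝ^{m+1} (supported on the simplex). -/
noncomputable def simplexProb (m : ℕ) : Measure (Fin (m+1) → ℝ) :=
  (m.factorial : ENNReal) • Measure.map (emb m) (volume.restrict (emb m ⁻¹' Simplex m))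

lemma half_pow_div_factorial_antitone : Antitone (fun j : ℕ => (1/2:ℝ)^j / j.factorial) := by
  apply antitone_nat_of_succ_le
  intro j
  apply div_le_div₀ (by positivity) (by rw [pow_succ]; nlinarith [pow_pos (by norm_num : (0:ℝ) < 1/2) j]) (by positivity)
  exact_mod_cast Nat.factorial_le (Nat.le_succ j)

lemma corner_vol : ∀ (d : ℕ) (c : ℝ), 0 ≤ c →
    volume {y : Fin d → ℝ | (∀ i, 0 < y i) ∧ ∑ i, y i ≤ c}
      ≤ ENNReal.ofReal (c ^ d / d.factorial) := by
  intro d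
  induction d with
  | zero =>
      intro c hc
      have h1 : (volume : Measure (Fin 0 → ℝ)) Set.univ = 1 := by
        simp [volume_pi, Measure.pi_univ]
      calc volume {y : Fin 0 → ℝ | (∀ i, 0 < y i) ∧ ∑ i, y i ≤ c}
          ≤ volume Set.univ := measure_mono (Set.subset_univ _)
        _ = 1 := h1
        _ ≤ ENNReal.ofReal (c ^ 0 / Nat.factorial 0) := by simp
  | succ d IH =>
      intro c hc
      classical
      set A : Set (ℝ × (Fin d → ℝ)) :=
        {q | 0 < q.1 ∧ (∀ i, 0 < q.2 i) ∧ q.1 + ∑ i, q.2 i ≤ c} with hAdef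
      have hA : MeasurableSet A := by
        have h2 : MeasurableSet {q : ℝ × (Fin d → ℝ) | ∀ i, 0 < q.2 i} := by
          rw [Set.setOf_forall]
          exact MeasurableSet.iInter fun i => measurableSet_lt measurable_const
            (measurable_snd.eval)
        exact (measurableSet_lt measurable_const measurable_fst).inter (h2.inter
          (measurableSet_le (measurable_fst.add
            (Finset.measurable_sum univ fun i _ => (measurable_pi_apply i).comp measurable_snd))
            measurable_const))
      have hmp := volume_preserving_piFinSuccAbove (fun _ : Fin (d+1) => ℝ) 0
      have hSA : {y : Fin (d+1) → ℝ | (∀ i, 0 < y i) ∧ ∑ i, y i ≤ c}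
          = (MeasurableEquiv.piFinSuccAbove (fun _ : Fin (d+1) => ℝ) 0) ⁻¹' A := by
        ext y
        simp only [Set.mem_setOf_eq, Set.mem_preimage, MeasurableEquiv.piFinSuccAbove,
          MeasurableEquiv.coe_mk, Fin.insertNthEquiv, Equiv.coe_fn_symm_mk, hAdef,
          Fin.succAbove_zero, Fin.sum_univ_succ, Fin.forall_fin_succ, Fin.removeNth]
        tauto
      rw [hSA, hmp.measure_preimage hA.nullMeasurableSet]
      rw [show (volume : Measure (ℝ × (Fin d → ℝ))) = (volume : Measure ℝ).prod volume from rfl]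
      rw [Measure.prod_apply hA]
      have hbound : ∀ t : ℝ, volume (Prod.mk t ⁻¹' A)
          ≤ (Set.Ioc 0 c).indicator (fun t => ENNReal.ofReal ((c - t) ^ d / d.factorial)) t := by
        intro t
        by_cases ht : t ∈ Set.Ioc 0 c
        · rw [Set.indicator_of_mem ht]
          have hsub : (Prod.mk t ⁻¹' A) ⊆ {y : Fin d → ℝ | (∀ i, 0 < y i) ∧ ∑ i, y i ≤ c - t} := by
            intro y hy
            exact ⟨hy.2.1, by linarith [hy.2.2]⟩
          exact le_trans (measure_mono hsub) (IH _ (by linarith [ht.2]))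
        · rw [Set.indicator_of_notMem ht]
          have : (Prod.mk t ⁻¹' A) = ∅ := by
            ext y
            simp only [Set.mem_preimage, hAdef, Set.mem_setOf_eq, Set.mem_empty_iff_false, iff_false]
            rintro ⟨h1, h2, h3⟩
            have hsum : 0 ≤ ∑ i, y i := Finset.sum_nonneg fun i _ => (h2 i).le
            simp only [Set.mem_Ioc, not_and, not_le] at ht
            have := ht h1
            linarith
          simp [this]
      calc ∫⁻ t, volume (Prod.mk t ⁻¹' A)
          ≤ ∫⁻ t, (Set.Ioc 0 c).indicator (fun t => ENNReal.ofReal ((c - t) ^ d / d.factorial)) t :=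
            lintegral_mono hbound
        _ = ∫⁻ t in Set.Ioc 0 c, ENNReal.ofReal ((c - t) ^ d / d.factorial) :=
            lintegral_indicator measurableSet_Ioc _
        _ = ENNReal.ofReal (∫ t in Set.Ioc 0 c, (c - t) ^ d / d.factorial) := by
            rw [← ofReal_integral_eq_lintegral_ofReal]
            · exact ((continuous_const.sub continuous_id').pow d |>.div_const _).integrableOn_Ioc
            · refine (ae_restrict_iff' measurableSet_Ioc).2 (Filter.Eventually.of_forall ?_)
              intro t ht
              have : 0 ≤ c - t := by linarith [ht.2]
              positivity
        _ = ENNReal.ofReal (c ^ (d+1) / (d+1).factorial) := by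
            congr 1
            rw [← intervalIntegral.integral_of_le hc]
            have h1 : (∫ t in (0:ℝ)..c, (c - t) ^ d / d.factorial)
                = (∫ t in (0:ℝ)..c, (c - t) ^ d) / d.factorial := by
              rw [intervalIntegral.integral_div]
            rw [h1, intervalIntegral.integral_comp_sub_left (fun u => u ^ d) c]
            simp only [sub_zero, sub_self]
            rw [integral_pow]
            rw [Nat.factorial_succ]
            push_cast
            field_simp
            simp

lemma corner_vol' (ι : Type) [Fintype ι] (c : ℝ) (hc : 0 ≤ c) :
    volume {y : ι → ℝ | (∀ i, 0 < y i) ∧ ∑ i, y i ≤ c}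
      ≤ ENNReal.ofReal (c ^ (Fintype.card ι) / (Fintype.card ι).factorial) := by
  classical
  set e : Fin (Fintype.card ι) ≃ ι := (Fintype.equivFin ι).symm with he
  have hmp := volume_preserving_arrowCongr' (β₁ := ℝ) e (MeasurableEquiv.refl ℝ)
    (MeasurePreserving.id _)
  have hpre : (MeasurableEquiv.arrowCongr' e (MeasurableEquiv.refl ℝ)) ⁻¹'
        {y : ι → ℝ | (∀ i, 0 < y i) ∧ ∑ i, y i ≤ c}
      = {x : Fin (Fintype.card ι) → ℝ | (∀ i, 0 < x i) ∧ ∑ i, x i ≤ c} := by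
    ext x
    simp only [Set.mem_preimage, Set.mem_setOf_eq, MeasurableEquiv.arrowCongr',
      Equiv.arrowCongr', Equiv.arrowCongr, MeasurableEquiv.coe_mk, Equiv.coe_fn_mk,
      MeasurableEquiv.refl, Function.comp, Equiv.refl_apply, EquivLike.coe_coe]
    constructor
    · rintro ⟨h1, h2⟩
      refine ⟨fun i => ?_, ?_⟩
      · have := h1 (e i); simpa using this
      · rw [← Equiv.sum_comp e (fun i => x (e.symm i))] at h2
        simpa using h2
    · rintro ⟨h1, h2⟩
      refine ⟨fun i => h1 _, ?_⟩
      rw [← Equiv.sum_comp e (fun i => x (e.symm i))]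
      simpa using h2
  have := hmp.measure_preimage (s := {y : ι → ℝ | (∀ i, 0 < y i) ∧ ∑ i, y i ≤ c}) ?_
  · rw [hpre] at this
    rw [← this]
    exact corner_vol _ c hc
  · have h2 : MeasurableSet {y : ι → ℝ | ∀ i, 0 < y i} := by
      rw [Set.setOf_forall]
      exact MeasurableSet.iInter fun i => measurableSet_lt measurable_const
        (measurable_pi_apply i)
    exact (h2.inter (measurableSet_le
      (Finset.measurable_sum univ fun i _ => measurable_pi_apply i)
      measurable_const)).nullMeasurableSet

lemma slab_vol (m : ℕ) (K : Finset (Fin m)) :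
    volume {x : Fin m → ℝ | (∀ i, 0 < x i ∧ x i < 1) ∧ ∑ i ∈ K, x i ≤ 1/2}
      ≤ ENNReal.ofReal ((1/2:ℝ) ^ K.card / (K.card).factorial) := by
  letI : Fintype {i : Fin m // i ∈ K} := Subtype.fintype _
  letI : Fintype {i : Fin m // ¬ i ∈ K} := Subtype.fintype _
  set A : Set ({i : Fin m // i ∈ K} → ℝ) := {y | (∀ i, 0 < y i) ∧ ∑ i, y i ≤ 1/2} with hAdef
  set B : Set ({i : Fin m // ¬ i ∈ K} → ℝ) := Set.pi Set.univ (fun _ => Set.Ioo (0:ℝ) 1)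
    with hBdef
  have hmp := volume_preserving_piEquivPiSubtypeProd (fun _ : Fin m => ℝ) (fun i => i ∈ K)
  have hsub : {x : Fin m → ℝ | (∀ i, 0 < x i ∧ x i < 1) ∧ ∑ i ∈ K, x i ≤ 1/2}
      ⊆ (MeasurableEquiv.piEquivPiSubtypeProd (fun _ : Fin m => ℝ) (fun i => i ∈ K)) ⁻¹'
        (A ×ˢ B) := by
    intro x hx
    obtain ⟨h1, h2⟩ := hx
    simp only [Set.mem_preimage, MeasurableEquiv.piEquivPiSubtypeProd,
      Equiv.piEquivPiSubtypeProd, MeasurableEquiv.coe_mk, Equiv.coe_fn_mk, Set.mem_prod,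
      hAdef, hBdef, Set.mem_setOf_eq, Set.mem_pi, Set.mem_univ, forall_true_left]
    refine ⟨⟨fun i => (h1 i).1, ?_⟩, fun i => ⟨(h1 i).1, (h1 i).2⟩⟩
    rw [← Finset.sum_subtype K (fun _ => Iff.rfl) x]
    exact h2
  have hAm : MeasurableSet A := by
    have h2 : MeasurableSet {y : {i : Fin m // i ∈ K} → ℝ | ∀ i, 0 < y i} := by
      rw [Set.setOf_forall]
      exact MeasurableSet.iInter fun i => measurableSet_lt measurable_const
        (measurable_pi_apply i)
    exact h2.inter (measurableSet_le
      (Finset.measurable_sum univ fun i _ => measurable_pi_apply i) measurable_const)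
  have hBm : MeasurableSet B := MeasurableSet.univ_pi fun _ => measurableSet_Ioo
  refine le_trans (measure_mono hsub) ?_
  rw [hmp.measure_preimage (hAm.prod hBm).nullMeasurableSet]
  rw [Measure.volume_eq_prod, Measure.prod_prod]
  have hB1 : volume B ≤ 1 := by
    rw [hBdef, volume_pi_pi]
    simp [Real.volume_Ioo]
  have hA1 : volume A ≤ ENNReal.ofReal ((1/2:ℝ) ^ K.card / (K.card).factorial) := by
    have h := corner_vol' {i : Fin m // i ∈ K} (1/2) (by norm_num)
    rw [Fintype.card_coe] at h
    convert h using 2 <;> exact Subsingleton.elim _ _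
  exact le_trans (mul_le_mul' hA1 hB1) (le_of_eq (mul_one _))

lemma measurable_emb (m : ℕ) : Measurable (emb m) := by
  rw [measurable_pi_iff]
  intro j
  induction j using Fin.lastCases with
  | last =>
      have : (fun x : Fin m → ℝ => emb m x (Fin.last m)) = fun x => 1 - ∑ i, x i := by
        ext x; simp [emb]
      rw [this]
      exact measurable_const.sub (Finset.measurable_sum univ fun i _ => measurable_pi_apply i)
  | cast i =>
      have : (fun x : Fin m → ℝ => emb m x i.castSucc) = fun x => x i := by
        ext x; simp [emb]
      rw [this]
      exact measurable_pi_apply i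

lemma measurableSet_simplex (m : ℕ) : MeasurableSet (Simplex m) := by
  have h2 : MeasurableSet {ℓ : Fin (m+1) → ℝ | ∀ i, 0 < ℓ i} := by
    rw [Set.setOf_forall]
    exact MeasurableSet.iInter fun i => measurableSet_lt measurable_const (measurable_pi_apply i)
  exact h2.inter (measurableSet_eq_fun
    (Finset.measurable_sum univ fun i _ => measurable_pi_apply i) measurable_const)

lemma measurableSet_gamma (m p : ℕ) : MeasurableSet (Gamma m p) := by
  have : Gamma m p = Simplex m ∩
      ⋂ (J : Finset (Fin (m+1))), ⋂ (_ : J.card = p), {ℓ | ∑ i ∈ J, ℓ i < 1/2} := by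
    ext ℓ
    simp only [Gamma, Set.mem_inter_iff, Set.mem_iInter, Set.mem_setOf_eq, Set.mem_sep_iff]
  rw [this]
  exact (measurableSet_simplex m).inter (MeasurableSet.iInter fun J =>
    MeasurableSet.iInter fun _ => measurableSet_lt
      (Finset.measurable_sum J fun i _ => measurable_pi_apply i) measurable_const)

lemma simplexProb_apply (m : ℕ) {S : Set (Fin (m+1) → ℝ)} (hS : MeasurableSet S)
    (hsub : S ⊆ Simplex m) :
    simplexProb m S = (m.factorial : ENNReal) * volume (emb m ⁻¹' S) := by
  rw [simplexProb, Measure.smul_apply, smul_eq_mul,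
    Measure.map_apply (measurable_emb m) hS,
    Measure.restrict_apply ((measurable_emb m) hS)]
  rw [Set.inter_eq_self_of_subset_left (Set.preimage_mono hsub)]

lemma emb_mem_simplex (m : ℕ) (x : Fin m → ℝ)
    (hx : emb m x ∈ Simplex m) : (∀ i, 0 < x i ∧ x i < 1) ∧ ∑ i, x i < 1 := by
  obtain ⟨hpos, _⟩ := hx
  have hxi : ∀ i, 0 < x i := fun i => by
    have := hpos i.castSucc
    simpa [emb] using this
  have hlast : 0 < 1 - ∑ i, x i := by
    have := hpos (Fin.last m)
    simpa [emb] using this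
  have hsum : ∑ i, x i < 1 := by linarith
  exact ⟨fun i => ⟨hxi i, lt_of_le_of_lt
    (Finset.single_le_sum (fun j _ => (hxi j).le) (mem_univ i)) hsum⟩, hsum⟩

lemma mu_bound (m k : ℕ) (hk1 : 1 ≤ k) (hkm : k ≤ m) :
    simplexProb m (Simplex m \ Gamma m k)
      ≤ ENNReal.ofReal (((m:ℝ)+1)^(2*k) * 2^(k+1) * (1/2)^(m+1)) := by
  classical
  have hS : MeasurableSet (Simplex m \ Gamma m k) :=
    (measurableSet_simplex m).diff (measurableSet_gamma m k)
  rw [simplexProb_apply m hS Set.diff_subset]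
  set KJ : Finset (Fin (m+1)) → Finset (Fin m) :=
    fun J => univ.filter (fun i : Fin m => i.castSucc ∉ J) with hKJ
  have hincl : emb m ⁻¹' (Simplex m \ Gamma m k) ⊆
      ⋃ J ∈ powersetCard k (univ : Finset (Fin (m+1))),
        {x : Fin m → ℝ | (∀ i, 0 < x i ∧ x i < 1) ∧ ∑ i ∈ KJ J, x i ≤ 1/2} := by
    intro x hx
    obtain ⟨hmem, hnot⟩ := hx
    obtain ⟨hbasic, hsum⟩ := emb_mem_simplex m x hmem
    have : ∃ J : Finset (Fin (m+1)), J.card = k ∧ 1/2 ≤ ∑ i ∈ J, emb m x i := by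
      by_contra hcon
      push_neg at hcon
      exact hnot ⟨hmem, fun J hJ => hcon J hJ⟩
    obtain ⟨J, hJcard, hJhalf⟩ := this
    refine Set.mem_biUnion (Finset.mem_powersetCard_univ.2 hJcard) ?_
    refine ⟨hbasic, ?_⟩
    have heq : ∑ i ∈ KJ J, x i = ∑ j ∈ (KJ J).image Fin.castSucc, emb m x j := by
      rw [Finset.sum_image (fun a _ b _ h => Fin.castSucc_injective m h)]
      apply Finset.sum_congr rfl
      intro i _
      simp [emb]
    have himg : (KJ J).image Fin.castSucc ⊆ Jᶜ := by
      intro j hj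
      simp only [hKJ, Finset.mem_image, Finset.mem_filter, Finset.mem_univ, true_and] at hj
      obtain ⟨i, hi, rfl⟩ := hj
      simpa using hi
    have hle : ∑ j ∈ (KJ J).image Fin.castSucc, emb m x j ≤ ∑ j ∈ Jᶜ, emb m x j :=
      Finset.sum_le_sum_of_subset_of_nonneg himg (fun j _ _ => (hmem.1 j).le)
    have hcompl : ∑ j ∈ Jᶜ, emb m x j + ∑ j ∈ J, emb m x j = 1 := by
      rw [Finset.sum_compl_add_sum]
      exact hmem.2
    rw [heq]
    linarith
  calc (m.factorial : ENNReal) * volume (emb m ⁻¹' (Simplex m \ Gamma m k))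
      ≤ (m.factorial : ENNReal) * ∑ J ∈ powersetCard k (univ : Finset (Fin (m+1))),
          volume {x : Fin m → ℝ | (∀ i, 0 < x i ∧ x i < 1) ∧ ∑ i ∈ KJ J, x i ≤ 1/2} := by
        apply mul_le_mul_right
        exact le_trans (measure_mono hincl) (measure_biUnion_finset_le _ _)
    _ ≤ (m.factorial : ENNReal) * ∑ J ∈ powersetCard k (univ : Finset (Fin (m+1))),
          ENNReal.ofReal ((1/2:ℝ) ^ (m-k) / (m-k).factorial) := by
        apply mul_le_mul_right
        apply Finset.sum_le_sum
        intro J hJ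
        refine le_trans (slab_vol m (KJ J)) (ENNReal.ofReal_le_ofReal ?_)
        have hcard : m - k ≤ (KJ J).card := by
          have h1 : (univ.filter (fun i : Fin m => i.castSucc ∈ J)).card ≤ k := by
            have := Finset.card_le_card_of_injOn
              (s := univ.filter (fun i : Fin m => i.castSucc ∈ J)) (t := J)
              (fun i : Fin m => i.castSucc)
              (fun i hi => (Finset.mem_filter.1 hi).2)
              (fun a _ b _ h => Fin.castSucc_injective m h)
            rwa [Finset.mem_powersetCard_univ.1 hJ] at this
          have h2 := Finset.card_filter_add_card_filter_not
            (s := (univ : Finset (Fin m))) (p := fun i : Fin m => i.castSucc ∈ J)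
          rw [Finset.card_univ, Fintype.card_fin] at h2
          simp only [hKJ]
          omega
        exact half_pow_div_factorial_antitone hcard
    _ = (m.factorial : ENNReal) * ((m+1).choose k *
          ENNReal.ofReal ((1/2:ℝ) ^ (m-k) / (m-k).factorial)) := by
        rw [Finset.sum_const, Finset.card_powersetCard, Finset.card_univ, Fintype.card_fin,
          nsmul_eq_mul]
    _ = ENNReal.ofReal ((m.factorial : ℝ) * ((m+1).choose k *
          ((1/2:ℝ) ^ (m-k) / (m-k).factorial))) := by
        rw [ENNReal.ofReal_mul (by positivity), ENNReal.ofReal_mul (by positivity)]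
        simp [ENNReal.ofReal_natCast]
    _ ≤ ENNReal.ofReal (((m:ℝ)+1)^(2*k) * 2^(k+1) * (1/2)^(m+1)) := by
        apply ENNReal.ofReal_le_ofReal
        have hdesc : (m.factorial : ℝ) / (m-k).factorial = (m.descFactorial k : ℝ) := by
          rw [div_eq_iff (ne_of_gt (by positivity))]
          norm_cast
          rw [mul_comm]
          exact (Nat.factorial_mul_descFactorial hkm).symm
        have h1 : (m.descFactorial k : ℝ) ≤ ((m:ℝ)+1)^k := by
          calc (m.descFactorial k : ℝ) ≤ (m:ℝ)^k := by exact_mod_cast Nat.descFactorial_le_pow m k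
            _ ≤ ((m:ℝ)+1)^k := pow_le_pow_left₀ (by positivity) (by linarith) k
        have h2 : (((m+1).choose k : ℝ)) ≤ ((m:ℝ)+1)^k := by
          exact_mod_cast Nat.choose_le_pow (m+1) k
        have h3 : ((1/2:ℝ))^(m-k) = 2^(k+1) * (1/2)^(m+1) := by
          have : (1/2:ℝ)^(m+1) = (1/2)^(m-k) * (1/2)^(k+1) := by
            rw [← pow_add]
            congr 1
            omega
          rw [this]
          field_simp
          rw [← mul_pow]; norm_num
        have hchoose_nn : (0:ℝ) ≤ ((m+1).choose k : ℝ) := by positivity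
        have hdesc_nn : (0:ℝ) ≤ (m.descFactorial k : ℝ) := by positivity
        calc (m.factorial : ℝ) * (((m+1).choose k) * ((1/2:ℝ) ^ (m-k) / (m-k).factorial))
            = (m.descFactorial k : ℝ) * ((m+1).choose k) * (1/2:ℝ)^(m-k) := by
              rw [← hdesc]; ring
          _ ≤ (((m:ℝ)+1)^k * ((m:ℝ)+1)^k) * (1/2:ℝ)^(m-k) := by
              apply mul_le_mul_of_nonneg_right _ (by positivity)
              exact mul_le_mul h1 h2 hchoose_nn (by positivity)
          _ = ((m:ℝ)+1)^(2*k) * 2^(k+1) * (1/2)^(m+1) := by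
              rw [h3, ← pow_add]
              ring_nf

lemma diff_subset_lambda (m k : ℕ) (hk : 1 ≤ k) :
    Simplex m \ Gamma m k ⊆ Lambda m k := by
  rintro ℓ ⟨hmem, hnot⟩
  refine ⟨hmem, ?_⟩
  have : ∃ J : Finset (Fin (m+1)), J.card = k ∧ 1/2 ≤ ∑ i ∈ J, ℓ i := by
    by_contra hcon
    push_neg at hcon
    exact hnot ⟨hmem, fun J hJ => hcon J hJ⟩
  obtain ⟨J, hJcard, hJhalf⟩ := this
  have hne : J.Nonempty := Finset.card_pos.1 (by omega)
  have hsum : ∑ _i ∈ J, (1/(2*(k:ℝ))) ≤ ∑ i ∈ J, ℓ i := by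
    rw [Finset.sum_const, hJcard, nsmul_eq_mul]
    have hk' : (0:ℝ) < k := by exact_mod_cast hk
    rw [show (k:ℝ) * (1/(2*(k:ℝ))) = 1/2 by field_simp]
    exact hJhalf
  obtain ⟨i, _, hi⟩ := Finset.exists_le_of_sum_le hne hsum
  exact ⟨i, hi⟩

/-- for an admissible sequence of measures ν_n = f_n·μ_n and fixed
p ≥ 0, there are C > 0 and 0 < a < 1 with ν_n(Δ^{n-1} - Γ_{p+2}) ≤ C·aⁿ (n = m+1). -/
theorem stmt15 (f : (m : ℕ) → (Fin (m+1) → ℝ) → ℝ)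
    (hmeas : ∀ m, Measurable (f m))
    (hnonneg : ∀ m ℓ, 0 ≤ f m ℓ)
    (hprob : ∀ m, ∫⁻ ℓ, ENNReal.ofReal (f m ℓ) ∂(simplexProb m) = 1)
    (hadm : ∀ p : ℕ, 1 ≤ p → ∃ A > (0:ℝ), ∃ b ∈ Set.Ioo (0:ℝ) 2,
        ∀ m : ℕ, ∀ ℓ ∈ Lambda m p, f m ℓ ≤ A * b^(m+1))
    (p : ℕ) :
    ∃ C > (0:ℝ), ∃ a ∈ Set.Ioo (0:ℝ) 1, ∀ m : ℕ,
      ((simplexProb m).withDensity (fun ℓ => ENNReal.ofReal (f m ℓ)))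
          (Simplex m \ Gamma m (p+2))
        ≤ ENNReal.ofReal (C * a^(m+1)) := by
  classical
  set k := p + 2 with hk
  obtain ⟨A, hA, b, hb, hbound⟩ := hadm k (by omega)
  obtain ⟨hb0, hb2⟩ := hb
  set a : ℝ := (b + 2) / 4 with ha
  have ha0 : 0 < a := by rw [ha]; linarith
  have ha1 : a < 1 := by rw [ha]; linarith
  have hahalf : 1/2 ≤ a := by rw [ha]; linarith
  set r : ℝ := b / (2 * a) with hr
  have hr0 : 0 ≤ r := by positivity
  have hr1 : r < 1 := by
    rw [hr, div_lt_one (by linarith)]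
    rw [ha]; linarith
  -- bound on n^(2k) r^n
  have htends : Tendsto (fun n : ℕ => (n:ℝ)^(2*k) * r^n) atTop (nhds 0) :=
    (summable_pow_mul_geometric_of_norm_lt_one (R := ℝ) (2*k) (r := r)
      (by rwa [Real.norm_eq_abs, abs_of_nonneg hr0])).tendsto_atTop_zero
  obtain ⟨M, hM⟩ := htends.bddAbove_range
  have hM' : ∀ n : ℕ, (n:ℝ)^(2*k) * r^n ≤ M := fun n => hM ⟨n, rfl⟩
  have hM0 : 0 ≤ M := le_trans (by norm_num) (hM' 0)
  set C : ℝ := A * 2^(k+1) * (M + 1) + 2^k with hC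
  have hC0 : 0 < C := by
    have : (0:ℝ) < 2^k := by positivity
    have h1 : 0 ≤ A * 2^(k+1) * (M+1) := by positivity
    linarith
  have hC2k : (2:ℝ)^k ≤ C := by
    have h1 : 0 ≤ A * 2^(k+1) * (M+1) := by positivity
    linarith
  refine ⟨C, hC0, a, ⟨ha0, ha1⟩, fun m => ?_⟩
  set ν := (simplexProb m).withDensity (fun ℓ => ENNReal.ofReal (f m ℓ)) with hν
  have hSmeas : MeasurableSet (Simplex m \ Gamma m k) :=
    (measurableSet_simplex m).diff (measurableSet_gamma m k)
  by_cases hmk : k ≤ m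
  · -- main case
    have hν_eq : ν (Simplex m \ Gamma m k)
        = ∫⁻ ℓ in (Simplex m \ Gamma m k), ENNReal.ofReal (f m ℓ) ∂(simplexProb m) :=
      withDensity_apply _ hSmeas
    have hstep : ν (Simplex m \ Gamma m k)
        ≤ ENNReal.ofReal (A * b^(m+1)) * simplexProb m (Simplex m \ Gamma m k) := by
      rw [hν_eq]
      calc ∫⁻ ℓ in (Simplex m \ Gamma m k), ENNReal.ofReal (f m ℓ) ∂(simplexProb m)
          ≤ ∫⁻ _ℓ in (Simplex m \ Gamma m k), ENNReal.ofReal (A * b^(m+1)) ∂(simplexProb m) := by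
            apply setLIntegral_mono' hSmeas
            intro ℓ hℓ
            exact ENNReal.ofReal_le_ofReal
              (hbound m ℓ (diff_subset_lambda m k (by omega) hℓ))
        _ = ENNReal.ofReal (A * b^(m+1)) * simplexProb m (Simplex m \ Gamma m k) := by
            rw [setLIntegral_const]
    calc ν (Simplex m \ Gamma m k)
        ≤ ENNReal.ofReal (A * b^(m+1)) *
            ENNReal.ofReal (((m:ℝ)+1)^(2*k) * 2^(k+1) * (1/2)^(m+1)) :=
          le_trans hstep (mul_le_mul_right (mu_bound m k (by omega) hmk) _)
      _ = ENNReal.ofReal ((A * b^(m+1)) * (((m:ℝ)+1)^(2*k) * 2^(k+1) * (1/2)^(m+1))) := by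
          rw [← ENNReal.ofReal_mul (by positivity)]
      _ ≤ ENNReal.ofReal (C * a^(m+1)) := by
          apply ENNReal.ofReal_le_ofReal
          have hab : b * (1/2) = r * a := by
            rw [hr]
            field_simp
          have hXr : ((m:ℝ)+1)^(2*k) * r^(m+1) ≤ M := by
            have := hM' (m+1)
            push_cast at this
            exact this
          have key : (A * b^(m+1)) * (((m:ℝ)+1)^(2*k) * 2^(k+1) * (1/2)^(m+1))
              = A * 2^(k+1) * (((m:ℝ)+1)^(2*k) * r^(m+1)) * a^(m+1) := by
            calc (A * b^(m+1)) * (((m:ℝ)+1)^(2*k) * 2^(k+1) * (1/2)^(m+1))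
                = A * 2^(k+1) * (((m:ℝ)+1)^(2*k) * (b * (1/2))^(m+1)) := by
                  rw [mul_pow]; ring
              _ = A * 2^(k+1) * (((m:ℝ)+1)^(2*k) * (r * a)^(m+1)) := by rw [hab]
              _ = A * 2^(k+1) * (((m:ℝ)+1)^(2*k) * r^(m+1)) * a^(m+1) := by
                  rw [mul_pow]; ring
          rw [key]
          apply mul_le_mul_of_nonneg_right _ (by positivity)
          have haux : (0:ℝ) ≤ A * 2^(k+1) := by positivity
          have h2k : (0:ℝ) < 2^k := by positivity
          have hexp : A * 2^(k+1) * (M+1) = A * 2^(k+1) * M + A * 2^(k+1) := by ring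
          have hmul : A * 2^(k+1) * (((m:ℝ)+1)^(2*k) * r^(m+1)) ≤ A * 2^(k+1) * M :=
            mul_le_mul_of_nonneg_left hXr haux
          rw [hC]
          linarith
  · -- small case: m < k
    have hν1 : ν (Simplex m \ Gamma m k) ≤ 1 := by
      calc ν (Simplex m \ Gamma m k) ≤ ν Set.univ := measure_mono (Set.subset_univ _)
        _ = 1 := by
            rw [hν, withDensity_apply _ MeasurableSet.univ, setLIntegral_univ]
            exact hprob m
    refine le_trans hν1 ?_
    rw [show (1:ENNReal) = ENNReal.ofReal 1 by simp]
    apply ENNReal.ofReal_le_ofReal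
    have h1 : (1/2:ℝ)^k ≤ a^(m+1) := by
      calc (1/2:ℝ)^k ≤ a^k := pow_le_pow_left₀ (by norm_num) hahalf k
        _ ≤ a^(m+1) := pow_le_pow_of_le_one ha0.le ha1.le (by omega)
    calc (1:ℝ) = 2^k * (1/2)^k := by
          rw [← mul_pow]; norm_num
      _ ≤ C * a^(m+1) := by
          apply mul_le_mul hC2k h1 (by positivity) (le_of_lt hC0)
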